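/- For every x ∈ [−1, 1], the series Σ_{n=1}^{∞} (2·(−1)ⁿ/(1 + n²π²)) cos(nπx) converges and cosh x = sinh 1 · (1 + Σ_{n=1}^{∞} (2·(−1)ⁿ/(1 + n²π²)) cos(nπx)). -/

import Mathlib

open Real

noncomputable section

lemma exp_pi_int (n : ℤ) : Complex.exp ((π:ℂ) * n * Complex.I) = (-1) ^ n := by
  rw [show (π:ℂ) * n * Complex.I = n * ((π:ℂ) * Complex.I) by ring, Complex.exp_int_mul,
    Complex.exp_pi_mul_I]

lemma coeff_eq (n : ℤ) :
    fourierCoeffOn (show (-1:ℝ) < -1 + 2 by norm_num) (fun x => (Real.cosh x : ℂ)) n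
      = (((-1:ℝ) ^ n * Real.sinh 1 / (1 + (n:ℝ)^2 * π^2) : ℝ) : ℂ) := by
  haveI : Fact (0 < (-1:ℝ) + 2 - -1) := ⟨by norm_num⟩
  set w : ℂ := (π:ℂ) * n * Complex.I with hw
  rw [fourierCoeffOn_eq_integral]
  simp only [fourier_coe_apply]
  rw [intervalIntegral.integral_congr
    (g := fun x : ℝ => (Complex.exp ((1 - w) * x) + Complex.exp ((-1 - w) * x))/2)
    (by
      intro x _
      show Complex.exp _ • (Real.cosh x : ℂ) = _
      simp only [smul_eq_mul, Complex.ofReal_cosh]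
      rw [show Complex.cosh (x:ℂ) = (Complex.exp x + Complex.exp (-x))/2 from rfl]
      rw [← mul_div_assoc, mul_add, ← Complex.exp_add, ← Complex.exp_add]
      have e1 : 2 * (π:ℂ) * Complex.I * ((-n : ℤ):ℂ) * (x:ℂ) / (((-1:ℝ) + 2 - -1 : ℝ):ℂ) + x
          = (1 - w) * x := by
        rw [hw]; push_cast; ring
      have e2 : 2 * (π:ℂ) * Complex.I * ((-n : ℤ):ℂ) * (x:ℂ) / (((-1:ℝ) + 2 - -1 : ℝ):ℂ) + -(x:ℂ)
          = (-1 - w) * x := by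
        rw [hw]; push_cast; ring
      rw [e1, e2])]
  have hc1 : (1 - w) ≠ 0 := by
    intro h
    have := congrArg Complex.re h
    simp [hw] at this
  have hc2 : (-1 - w) ≠ 0 := by
    intro h
    have := congrArg Complex.re h
    simp [hw] at this
  have i1 : IntervalIntegrable (fun x : ℝ => Complex.exp ((1 - w) * x)) MeasureTheory.volume (-1) (-1 + 2) :=
    (Complex.continuous_exp.comp (continuous_const.mul Complex.continuous_ofReal)).intervalIntegrable _ _
  have i2 : IntervalIntegrable (fun x : ℝ => Complex.exp ((-1 - w) * x)) MeasureTheory.volume (-1) (-1 + 2) :=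
    (Complex.continuous_exp.comp (continuous_const.mul Complex.continuous_ofReal)).intervalIntegrable _ _
  rw [intervalIntegral.integral_div, intervalIntegral.integral_add i1 i2,
    integral_exp_mul_complex hc1, integral_exp_mul_complex hc2]
  -- now pure algebra
  have hes : Complex.exp w = (-1) ^ n := exp_pi_int n
  have hsinv : ((-1:ℂ) ^ n)⁻¹ = (-1) ^ n := by rw [← inv_zpow]; norm_num
  have hene : Complex.exp w ≠ 0 := Complex.exp_ne_zero w
  have k1 : Complex.exp ((1 - w) * ((-1:ℂ) + 2)) = Complex.exp 1 * ((-1:ℂ)^n) := by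
    norm_num
    rw [Complex.exp_sub, hes, div_eq_mul_inv, hsinv]
  have k2 : Complex.exp ((1 - w) * (-1:ℂ)) = (Complex.exp 1)⁻¹ * ((-1:ℂ)^n) := by
    rw [show (1 - w) * (-1:ℂ) = -(1:ℂ) + w by ring, Complex.exp_add, hes, Complex.exp_neg]
  have k3 : Complex.exp ((-1 - w) * ((-1:ℂ) + 2)) = (Complex.exp 1)⁻¹ * ((-1:ℂ)^n) := by
    norm_num
    rw [show (-1 - w : ℂ) = -(1:ℂ) + -w by ring, Complex.exp_add, Complex.exp_neg w, hes, hsinv,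
      Complex.exp_neg 1]
  have k4 : Complex.exp ((-1 - w) * (-1:ℂ)) = Complex.exp 1 * ((-1:ℂ)^n) := by
    rw [show (-1 - w) * (-1:ℂ) = 1 + w by ring, Complex.exp_add, hes]
  have hS : ((Real.sinh 1 : ℝ) : ℂ) = (Complex.exp 1 - (Complex.exp 1)⁻¹)/2 := by
    rw [Complex.ofReal_sinh]
    push_cast
    rw [show Complex.sinh 1 = (Complex.exp 1 - Complex.exp (-1))/2 from rfl, Complex.exp_neg]
  have hw2 : (1 - w) * (-1 - w) = -(1 + (n:ℂ)^2 * (π:ℂ)^2) := by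
    rw [hw]
    linear_combination ((π:ℂ)^2*(n:ℂ)^2) * Complex.I_sq
  have hden : ((1:ℂ) + (n:ℂ)^2 * (π:ℂ)^2) ≠ 0 := by
    have h0 : (0:ℝ) < 1 + (n:ℝ)^2 * π^2 := by positivity
    intro h
    rw [show ((1:ℂ) + (n:ℂ)^2 * (π:ℂ)^2) = (((1 + (n:ℝ)^2 * π^2 : ℝ)):ℂ) by push_cast; ring] at h
    exact h0.ne' (by exact_mod_cast h)
  have hEne : Complex.exp 1 ≠ 0 := Complex.exp_ne_zero 1
  rw [Complex.real_smul]
  push_cast [hS]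
  rw [show ((1:ℂ) + (n:ℂ)^2 * (π:ℂ)^2) = -((1 - w) * (-1 - w)) by rw [hw2]; ring]
  clear hw2 hes hene i1 i2 hw
  clear_value w
  rw [k1, k2, k3, k4, div_add_div _ _ hc1 hc2]
  have hc3 : (1 - w) * (-1 - w) ≠ 0 := mul_ne_zero hc1 hc2
  field_simp
  ring

lemma hsummN : Summable (fun n : ℕ => Real.sinh 1 / (1 + (n:ℝ)^2 * π^2)) := by
  have hbase0 : Summable (fun n : ℕ => 1 / ((n:ℝ))^2) :=
    Real.summable_one_div_nat_pow.mpr one_lt_two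
  have hbase : Summable (fun n : ℕ => 1 / ((n:ℝ)+1)^2) := by
    refine ((summable_nat_add_iff 1).mpr hbase0).congr (fun n => ?_)
    push_cast; ring
  have hs1 : (0:ℝ) < Real.sinh 1 := Real.sinh_pos_iff.mpr one_pos
  have hπ : (3:ℝ) ≤ π^2 := by nlinarith [Real.pi_gt_three]
  refine Summable.of_nonneg_of_le (fun n => by positivity) (fun n => ?_)
    (hbase.mul_left (2 * Real.sinh 1))
  have h1 : ((n:ℝ)+1)^2 ≤ 2*(1+(n:ℝ)^2*π^2) := by
    nlinarith [sq_nonneg ((n:ℝ) - 1), Nat.cast_nonneg (α := ℝ) n]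
  rw [mul_one_div, div_le_div_iff₀ (by positivity) (by positivity)]
  nlinarith [mul_le_mul_of_nonneg_left h1 hs1.le]

lemma pair_exp (θ : ℝ) :
    Complex.exp ((θ:ℂ) * Complex.I) + Complex.exp ((-θ:ℝ) * Complex.I)
      = 2 * ((Real.cos θ : ℝ) : ℂ) := by
  rw [Complex.exp_mul_I, Complex.exp_mul_I]
  push_cast
  simp only [Complex.cos_neg, Complex.sin_neg, Complex.ofReal_cos]
  ring


/-- Fourier expansion of `cosh` on `[-1, 1]`:
`cosh x = sinh 1 · (1 + ∑_{n ≥ 1} 2(-1)ⁿ/(1 + n²π²) · cos(nπx))`. -/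
theorem statement14 :
    ∀ x ∈ Set.Icc (-1 : ℝ) 1,
      Summable (fun n : ℕ =>
        2 * (-1 : ℝ) ^ (n + 1) / (1 + ((n : ℝ) + 1) ^ 2 * π ^ 2) *
          Real.cos (((n : ℝ) + 1) * π * x)) ∧
      Real.cosh x = Real.sinh 1 *
        (1 + ∑' n : ℕ,
          2 * (-1 : ℝ) ^ (n + 1) / (1 + ((n : ℝ) + 1) ^ 2 * π ^ 2) *
            Real.cos (((n : ℝ) + 1) * π * x)) := by
  intro x hx
  haveI : Fact (0 < (2:ℝ)) := ⟨by norm_num⟩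
  have hcont : Continuous (AddCircle.liftIco (2:ℝ) (-1) (fun y : ℝ => (Real.cosh y : ℂ))) := by
    apply AddCircle.liftIco_continuous
    · norm_num [Real.cosh_neg]
    · exact (Complex.continuous_ofReal.comp Real.continuous_cosh).continuousOn
  set F : C(AddCircle (2:ℝ), ℂ) := ⟨_, hcont⟩ with hF
  have hcoeff : ∀ i : ℤ, fourierCoeff (⇑F) i
      = (((-1:ℝ)^i * Real.sinh 1 / (1 + (i:ℝ)^2*π^2) : ℝ) : ℂ) := by
    intro i
    show fourierCoeff (AddCircle.liftIco (2:ℝ) (-1) _) i = _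
    rw [fourierCoeff_liftIco_eq]
    exact coeff_eq i
  have hnorm : ∀ i : ℤ, ‖fourierCoeff (⇑F) i‖ = Real.sinh 1 / (1 + (i:ℝ)^2 * π^2) := by
    intro i
    rw [hcoeff i, Complex.norm_real, Real.norm_eq_abs, abs_div, abs_mul,
      show |(-1:ℝ)^i| = 1 by rcases Int.even_or_odd i with h | h <;> simp [h.neg_one_zpow],
      one_mul, abs_of_pos (Real.sinh_pos_iff.mpr one_pos), abs_of_pos (by positivity)]
  have hsummZ : Summable (fourierCoeff (⇑F)) := by
    apply Summable.of_norm
    refine Summable.congr ?_ (fun i => (hnorm i).symm)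
    apply Summable.of_nat_of_neg_add_one
    · exact hsummN.congr (fun n => by push_cast; ring_nf)
    · refine ((summable_nat_add_iff 1).mpr hsummN).congr (fun n => ?_)
      push_cast; ring_nf
  have hpt := has_pointwise_sum_fourier_series_of_summable (f := F) hsummZ
    ((x : ℝ) : AddCircle (2:ℝ))
  have hFx : F ((x : ℝ) : AddCircle (2:ℝ)) = (Real.cosh x : ℂ) := by
    rcases eq_or_lt_of_le hx.2 with h1 | h1
    · show AddCircle.liftIco (2:ℝ) (-1) (fun y : ℝ => (Real.cosh y : ℂ)) ((x:ℝ) : AddCircle (2:ℝ)) = ((Real.cosh x : ℝ) : ℂ)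
      rw [h1, show ((1:ℝ) : AddCircle (2:ℝ)) = ((-1:ℝ) : AddCircle (2:ℝ)) from
        (congrArg _ (by norm_num : (1:ℝ) = -1 + 2)).trans (AddCircle.coe_add_period 2 (-1)),
        AddCircle.liftIco_coe_apply (by norm_num)]
      norm_num [Real.cosh_neg]
    · show AddCircle.liftIco (2:ℝ) (-1) (fun y : ℝ => (Real.cosh y : ℂ)) ((x:ℝ) : AddCircle (2:ℝ)) = ((Real.cosh x : ℝ) : ℂ)
      rw [AddCircle.liftIco_coe_apply (by constructor <;> [exact hx.1; linarith])]
  rw [hFx] at hpt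
  have haux : ∀ i : ℤ,
      fourierCoeff (⇑F) i • fourier i ((x : ℝ) : AddCircle (2:ℝ))
        + fourierCoeff (⇑F) (-i) • fourier (-i) ((x : ℝ) : AddCircle (2:ℝ))
      = (((-1:ℝ)^i * Real.sinh 1 / (1 + (i:ℝ)^2*π^2) * (2 * Real.cos ((i:ℝ) * π * x)) : ℝ) : ℂ) := by
    intro i
    rw [hcoeff i, hcoeff (-i)]
    simp only [fourier_coe_apply, smul_eq_mul]
    have hceq : (((-1:ℝ)^(-i) * Real.sinh 1 / (1 + ((-i:ℤ):ℝ)^2*π^2) : ℝ) : ℂ)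
        = (((-1:ℝ)^i * Real.sinh 1 / (1 + (i:ℝ)^2*π^2) : ℝ) : ℂ) := by
      norm_cast
      rw [zpow_neg, ← inv_zpow]
      norm_num
    rw [hceq, ← mul_add]
    have e1 : (2 * (π:ℂ) * Complex.I * (i:ℂ) * (x:ℂ) / ((2:ℝ):ℂ))
        = (((i:ℝ) * π * x : ℝ) : ℂ) * Complex.I := by push_cast; ring
    have e2 : (2 * (π:ℂ) * Complex.I * ((-i:ℤ):ℂ) * (x:ℂ) / ((2:ℝ):ℂ))
        = ((-( (i:ℝ) * π * x) : ℝ) : ℂ) * Complex.I := by push_cast; ring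
    rw [e1, e2, pair_exp]
    push_cast
    ring
  have hq := hpt.nat_add_neg
  have hq1 := (hasSum_nat_add_iff' (f := fun n : ℕ =>
      fourierCoeff (⇑F) (n:ℤ) • fourier (n:ℤ) ((x : ℝ) : AddCircle (2:ℝ))
        + fourierCoeff (⇑F) (-(n:ℤ)) • fourier (-(n:ℤ)) ((x : ℝ) : AddCircle (2:ℝ))) 1).mpr hq
  -- value simplification
  have hq0 : ∑ i ∈ Finset.range 1, (fourierCoeff (⇑F) (i:ℤ) • fourier (i:ℤ) ((x : ℝ) : AddCircle (2:ℝ))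
        + fourierCoeff (⇑F) (-(i:ℤ)) • fourier (-(i:ℤ)) ((x : ℝ) : AddCircle (2:ℝ)))
      = 2 * ((Real.sinh 1 : ℝ) : ℂ) := by
    rw [Finset.sum_range_one]
    simp only [Nat.cast_zero, neg_zero]
    rw [hcoeff 0]
    norm_num [fourier_zero]
    ring
  have hterm : ∀ n : ℕ,
      (fourierCoeff (⇑F) (((n+1:ℕ)):ℤ) • fourier (((n+1:ℕ)):ℤ) ((x : ℝ) : AddCircle (2:ℝ))
        + fourierCoeff (⇑F) (-(((n+1:ℕ)):ℤ)) • fourier (-(((n+1:ℕ)):ℤ)) ((x : ℝ) : AddCircle (2:ℝ)))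
      = ((Real.sinh 1 * (2 * (-1:ℝ)^(n+1) / (1 + ((n:ℝ)+1)^2*π^2)
          * Real.cos (((n:ℝ)+1)*π*x)) : ℝ) : ℂ) := by
    intro n
    rw [haux (((n+1:ℕ)):ℤ)]
    norm_cast
    push_cast [zpow_natCast]
    ring
  have hq2 : HasSum (fun n : ℕ =>
      ((Real.sinh 1 * (2 * (-1:ℝ)^(n+1) / (1 + ((n:ℝ)+1)^2*π^2)
          * Real.cos (((n:ℝ)+1)*π*x)) : ℝ) : ℂ))
      ((Real.cosh x : ℂ) - (Real.sinh 1 : ℂ)) := by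
    convert hq1 using 1
    · rfl
    · exact funext fun n => (hterm n).symm
    · rw [hq0, hcoeff 0]
      norm_num [fourier_zero]
      ring
  have hq3 := Complex.reCLM.hasSum hq2
  simp only [Complex.reCLM_apply, Complex.ofReal_re, Complex.sub_re] at hq3
  have hsne : Real.sinh 1 ≠ 0 := (Real.sinh_pos_iff.mpr one_pos).ne'
  have ht : HasSum (fun n : ℕ => 2 * (-1:ℝ)^(n+1) / (1 + ((n:ℝ)+1)^2*π^2)
      * Real.cos (((n:ℝ)+1)*π*x)) ((Real.sinh 1)⁻¹ * (Real.cosh x - Real.sinh 1)) := by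
    have h := hq3.mul_left (Real.sinh 1)⁻¹
    simpa [inv_mul_cancel_left₀ hsne] using h
  refine ⟨ht.summable, ?_⟩
  rw [ht.tsum_eq]
  field_simp
  ring
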